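/- Let (Ω, 𝒜, ℙ) be a probability space and Z a real-valued random variable with E[e^{λ|Z|}] < ∞ for some λ ≥ 0. Let Ẑ be a real random variable satisfying the stationarity property Ẑ = E[Z | σ(Ẑ)] almost surely (as is the case for quadratic optimal quantizers). Then E[ e^{λ·max(|Z|, |Ẑ|)} ] ≤ 2 E[ e^{λ|Z|} ]. Moreover, if Z is centered Gaussian with variance σ_Z², then for every q ≥ 1, ( E[ e^{2qλ·max(|Z|,|Ẑ|)} ] )^{1/(2q)} ≤ 2^{1/q} · e^{q λ² σ_Z²}. -/

import Mathlib

open MeasureTheory ProbabilityTheory Real NNReal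


lemma tangent_ineq {lam : ℝ} (hlam : 0 ≤ lam) (y z : ℝ) :
    exp (lam * |y|) + (if 0 ≤ y then lam * exp (lam * y) else -(lam * exp (-(lam * y)))) * (z - y)
      ≤ exp (lam * |z|) := by
  by_cases hy : 0 ≤ y
  · rw [if_pos hy, abs_of_nonneg hy]
    have h2 := mul_le_mul_of_nonneg_left (Real.add_one_le_exp (lam * (z - y)))
      (exp_pos (lam * y)).le
    have h3 : exp (lam * y) * exp (lam * (z - y)) = exp (lam * z) := by
      rw [← exp_add]; ring_nf
    have h4 : exp (lam * z) ≤ exp (lam * |z|) :=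
      exp_le_exp.2 (mul_le_mul_of_nonneg_left (le_abs_self z) hlam)
    nlinarith [exp_pos (lam * y)]
  · rw [if_neg hy, abs_of_neg (lt_of_not_ge hy)]
    have h2 := mul_le_mul_of_nonneg_left (Real.add_one_le_exp (-lam * (z - y)))
      (exp_pos (-(lam * y))).le
    have h3 : exp (-(lam * y)) * exp (-lam * (z - y)) = exp (-(lam * z)) := by
      rw [← exp_add]; ring_nf
    have h4 : exp (-(lam * z)) ≤ exp (lam * |z|) := by
      apply exp_le_exp.2
      rw [← mul_neg]
      exact mul_le_mul_of_nonneg_left (neg_le_abs z) hlam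
    have h5 : lam * -y = -(lam * y) := by ring
    rw [h5]
    nlinarith [exp_pos (-(lam * y))]

lemma quantizer_exp_bound
    {Ω : Type*} [mΩ : MeasurableSpace Ω] (P : Measure Ω) [IsProbabilityMeasure P]
    (Z hatZ : Ω → ℝ) (hZ : Measurable Z) (hhatZ : Measurable hatZ)
    (lam : ℝ) (hlam : 0 ≤ lam)
    (hint : Integrable (fun ω => exp (lam * |Z ω|)) P)
    (hstat : hatZ =ᵐ[P] P[Z | MeasurableSpace.comap hatZ inferInstance]) :
    Integrable (fun ω => exp (lam * |hatZ ω|)) P ∧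
      ∫ ω, exp (lam * |hatZ ω|) ∂P ≤ ∫ ω, exp (lam * |Z ω|) ∂P := by
  rcases eq_or_lt_of_le hlam with h0 | hpos
  · simp only [← h0, zero_mul, exp_zero]
    exact ⟨integrable_const 1, le_rfl⟩
  -- subgradient function
  set g : ℝ → ℝ := fun y => if 0 ≤ y then lam * exp (lam * y) else -(lam * exp (-(lam * y)))
    with hg_def
  have hgmeas : Measurable g := by
    apply Measurable.ite (measurableSet_le measurable_const measurable_id)
    · exact ((measurable_id.const_mul lam).exp).const_mul lam
    · exact (((measurable_id.const_mul lam).neg.exp).const_mul lam).neg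
  have hg_abs : ∀ y : ℝ, |g y| = lam * exp (lam * |y|) := by
    intro y
    by_cases hy : 0 ≤ y
    · simp only [hg_def, if_pos hy, abs_of_nonneg hy]
      rw [abs_of_nonneg (by positivity)]
    · simp only [hg_def, if_neg hy, abs_neg, abs_of_neg (lt_of_not_ge hy)]
      rw [abs_of_nonneg (by positivity), mul_neg]
  -- the sets B n
  set B : ℕ → Set Ω := fun n => {ω | |hatZ ω| ≤ n} with hB_def
  set φ : ℕ → Ω → ℝ := fun n => (B n).indicator (fun ω => g (hatZ ω)) with hφ_def
  set f1 : ℕ → Ω → ℝ := fun n => (B n).indicator (fun ω => exp (lam * |hatZ ω|)) with hf1_def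
  -- ambient measurability facts
  have hBmeasΩ : ∀ n, MeasurableSet (B n) := fun n =>
    measurableSet_le hhatZ.abs measurable_const
  have hmeasE : Measurable (fun ω => exp (lam * |hatZ ω|)) :=
    (hhatZ.abs.const_mul lam).exp
  have hf1meas : ∀ n, Measurable (f1 n) := fun n => hmeasE.indicator (hBmeasΩ n)
  have hFmeas : ∀ n, Measurable (fun ω => ENNReal.ofReal (f1 n ω)) :=
    fun n => (hf1meas n).ennreal_ofReal
  have hf1nonneg : ∀ n, ∀ ω, 0 ≤ f1 n ω := fun n ω =>
    Set.indicator_nonneg (fun ω _ => (exp_pos _).le) ω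
  have hf1int : ∀ n, Integrable (f1 n) P := by
    intro n
    refine (integrable_const (exp (lam * n))).mono' (hf1meas n).aestronglyMeasurable
      (Filter.Eventually.of_forall fun ω => ?_)
    rw [Real.norm_eq_abs, abs_of_nonneg (hf1nonneg n ω)]
    simp only [hf1_def]
    by_cases hω : ω ∈ B n
    · rw [Set.indicator_of_mem hω]
      exact exp_le_exp.2 (mul_le_mul_of_nonneg_left hω hlam)
    · rw [Set.indicator_of_notMem hω]; positivity
  have hφ_bdd : ∀ n, ∀ ω, ‖φ n ω‖ ≤ lam * exp (lam * n) := by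
    intro n ω
    simp only [hφ_def, Real.norm_eq_abs]
    by_cases hω : ω ∈ B n
    · rw [Set.indicator_of_mem hω, hg_abs]
      exact mul_le_mul_of_nonneg_left (exp_le_exp.2 (mul_le_mul_of_nonneg_left hω hlam)) hlam
    · rw [Set.indicator_of_notMem hω, abs_zero]; positivity
  -- Z is integrable
  have hZint : Integrable Z P := by
    refine (hint.div_const lam).mono' hZ.aestronglyMeasurable
      (Filter.Eventually.of_forall fun ω => ?_)
    rw [Real.norm_eq_abs, le_div_iff₀ hpos]
    nlinarith [Real.add_one_le_exp (lam * |Z ω|)]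
  -- now introduce the sub-σ-algebra
  set m : MeasurableSpace Ω := MeasurableSpace.comap hatZ inferInstance with hm_def
  have hm : m ≤ mΩ := hhatZ.comap_le
  haveI : SigmaFinite (P.trim hm) := by
    haveI := isFiniteMeasure_trim (μ := P) hm
    infer_instance
  have hhatZint : Integrable hatZ P := integrable_condExp.congr hstat.symm
  have hhatZm : Measurable[m] hatZ := fun s hs => ⟨s, hs, rfl⟩
  have hBmeas : ∀ n, MeasurableSet[m] (B n) := fun n =>
    measurableSet_le hhatZm.abs measurable_const
  have hφ_sm : ∀ n, StronglyMeasurable[m] (φ n) := fun n =>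
    ((hgmeas.comp hhatZm).stronglyMeasurable).indicator (hBmeas n)
  -- zero mean of correction term
  have hZsub : Integrable (Z - hatZ) P := hZint.sub hhatZint
  have hh2int : ∀ n, Integrable (φ n * (Z - hatZ)) P := fun n =>
    hZsub.bdd_mul ((hφ_sm n).mono hm).aestronglyMeasurable
      (Filter.Eventually.of_forall (hφ_bdd n))
  have hcondsub : P[Z - hatZ | m] =ᵐ[P] 0 := by
    have h1 : P[Z - hatZ | m] =ᵐ[P] P[Z|m] - P[hatZ|m] := condExp_sub hZint hhatZint m
    have h2 : P[hatZ|m] =ᵐ[P] P[Z|m] := by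
      refine (condExp_congr_ae hstat).trans ?_
      exact condExp_condExp_of_le le_rfl hm
    filter_upwards [h1, h2] with ω hω1 hω2
    simp [hω1, hω2]
  have hh2zero : ∀ n, ∫ ω, (φ n * (Z - hatZ)) ω ∂P = 0 := by
    intro n
    rw [← integral_condExp hm (f := φ n * (Z - hatZ))]
    have hpull := condExp_stronglyMeasurable_mul_of_bound hm (hφ_sm n) hZsub
      (lam * exp (lam * n)) (Filter.Eventually.of_forall (hφ_bdd n))
    have h0 : P[φ n * (Z - hatZ) | m] =ᵐ[P] 0 := by
      refine hpull.trans ?_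
      filter_upwards [hcondsub] with ω hω
      simp only [Pi.mul_apply, hω, Pi.zero_apply, mul_zero]
    rw [integral_congr_ae h0]
    simp
  -- the per-n bound
  have step : ∀ n, ∫ ω, f1 n ω ∂P ≤ ∫ ω, exp (lam * |Z ω|) ∂P := by
    intro n
    have hpt : ∀ ω, f1 n ω + (φ n * (Z - hatZ)) ω ≤ exp (lam * |Z ω|) := by
      intro ω
      simp only [hf1_def, hφ_def, Pi.mul_apply, Pi.sub_apply]
      by_cases hω : ω ∈ B n
      · rw [Set.indicator_of_mem hω, Set.indicator_of_mem hω]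
        exact tangent_ineq hlam (hatZ ω) (Z ω)
      · rw [Set.indicator_of_notMem hω, Set.indicator_of_notMem hω, zero_mul, add_zero]
        positivity
    calc ∫ ω, f1 n ω ∂P = ∫ ω, (f1 n ω + (φ n * (Z - hatZ)) ω) ∂P := by
          rw [integral_add (hf1int n) (hh2int n), hh2zero n, add_zero]
      _ ≤ ∫ ω, exp (lam * |Z ω|) ∂P :=
          integral_mono ((hf1int n).add (hh2int n)) hint hpt
  -- monotone convergence
  have key : ∫⁻ ω, ENNReal.ofReal (exp (lam * |hatZ ω|)) ∂P
      ≤ ENNReal.ofReal (∫ ω, exp (lam * |Z ω|) ∂P) := by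
    have hFmono : Monotone (fun n => fun ω => ENNReal.ofReal (f1 n ω)) := by
      intro a b hab ω
      apply ENNReal.ofReal_le_ofReal
      simp only [hf1_def]
      apply Set.indicator_le_indicator_of_subset
      · intro x hx
        simp only [hB_def, Set.mem_setOf_eq] at hx ⊢
        exact hx.trans (Nat.cast_le.2 hab)
      · exact fun x => (exp_pos _).le
    have hsup : ∀ ω, ⨆ n, ENNReal.ofReal (f1 n ω) = ENNReal.ofReal (exp (lam * |hatZ ω|)) := by
      intro ω
      apply le_antisymm
      · refine iSup_le fun n => ENNReal.ofReal_le_ofReal ?_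
        simp only [hf1_def]
        by_cases hω : ω ∈ B n
        · rw [Set.indicator_of_mem hω]
        · rw [Set.indicator_of_notMem hω]; positivity
      · obtain ⟨n, hn⟩ := exists_nat_ge |hatZ ω|
        refine le_iSup_of_le n ?_
        have hmem : ω ∈ B n := by simp only [hB_def, Set.mem_setOf_eq]; exact hn
        have he : f1 n ω = exp (lam * |hatZ ω|) := by
          simp only [hf1_def]
          exact Set.indicator_of_mem hmem _
        rw [he]
    calc ∫⁻ ω, ENNReal.ofReal (exp (lam * |hatZ ω|)) ∂P
        = ∫⁻ ω, ⨆ n, ENNReal.ofReal (f1 n ω) ∂P := by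
          refine lintegral_congr fun ω => (hsup ω).symm
      _ = ⨆ n, ∫⁻ ω, ENNReal.ofReal (f1 n ω) ∂P := lintegral_iSup hFmeas hFmono
      _ ≤ ENNReal.ofReal (∫ ω, exp (lam * |Z ω|) ∂P) := by
          refine iSup_le fun n => ?_
          rw [← ofReal_integral_eq_lintegral_ofReal (hf1int n)
            (Filter.Eventually.of_forall (hf1nonneg n))]
          exact ENNReal.ofReal_le_ofReal (step n)
  have hintE : Integrable (fun ω => exp (lam * |hatZ ω|)) P := by
    refine ⟨hmeasE.aestronglyMeasurable, ?_⟩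
    rw [hasFiniteIntegral_iff_norm]
    have hne : ∀ ω, ENNReal.ofReal ‖exp (lam * |hatZ ω|)‖ = ENNReal.ofReal (exp (lam * |hatZ ω|)) :=
      fun ω => by rw [Real.norm_eq_abs, abs_of_nonneg (exp_pos _).le]
    calc ∫⁻ ω, ENNReal.ofReal ‖exp (lam * |hatZ ω|)‖ ∂P
        = ∫⁻ ω, ENNReal.ofReal (exp (lam * |hatZ ω|)) ∂P := lintegral_congr hne
      _ ≤ ENNReal.ofReal (∫ ω, exp (lam * |Z ω|) ∂P) := key
      _ < ⊤ := ENNReal.ofReal_lt_top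
  refine ⟨hintE, ?_⟩
  have h1 : ENNReal.ofReal (∫ ω, exp (lam * |hatZ ω|) ∂P)
      ≤ ENNReal.ofReal (∫ ω, exp (lam * |Z ω|) ∂P) := by
    rw [ofReal_integral_eq_lintegral_ofReal hintE
      (Filter.Eventually.of_forall fun ω => (exp_pos _).le)]
    exact key
  have h2 := ENNReal.toReal_mono ENNReal.ofReal_ne_top h1
  rwa [ENNReal.toReal_ofReal (integral_nonneg fun ω => (exp_pos _).le),
    ENNReal.toReal_ofReal (integral_nonneg fun ω => (exp_pos _).le)] at h2


lemma gaussian_mgf (v : ℝ≥0) (hv : v ≠ 0) (t : ℝ) :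
    Integrable (fun x => exp (t * x)) (gaussianReal 0 v) ∧
    ∫ x, exp (t * x) ∂(gaussianReal 0 v) = exp (t ^ 2 * v / 2) := by
  have hv' : (v : ℝ) ≠ 0 := NNReal.coe_ne_zero.mpr hv
  have hkey : ∀ x : ℝ, (gaussianPDFReal 0 v x) * exp (t * x)
      = exp (t ^ 2 * v / 2) * gaussianPDFReal (t * v) v x := by
    intro x
    simp only [gaussianPDFReal]
    rw [mul_assoc, ← exp_add, mul_left_comm, ← exp_add]
    congr 2
    field_simp
    ring
  have hmap : gaussianReal 0 v = volume.withDensity (gaussianPDF 0 v) :=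
    gaussianReal_of_var_ne_zero 0 hv
  have hd : gaussianPDF 0 v = fun x => ((gaussianPDFReal 0 v x).toNNReal : ENNReal) := by
    funext x
    rw [gaussianPDF_def]
    rfl
  have hsmul : (fun x => ((gaussianPDFReal 0 v x).toNNReal : ℝ) • exp (t * x))
      = fun x => exp (t ^ 2 * v / 2) * gaussianPDFReal (t * v) v x := by
    funext x
    rw [smul_eq_mul, Real.coe_toNNReal _ (gaussianPDFReal_nonneg 0 v x), hkey x]
  have hmeaspdf : Measurable fun x => (gaussianPDFReal 0 v x).toNNReal :=
    (measurable_gaussianPDFReal 0 v).real_toNNReal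
  constructor
  · rw [hmap, hd]
    rw [integrable_withDensity_iff_integrable_smul hmeaspdf]
    have : (fun x => (gaussianPDFReal 0 v x).toNNReal • exp (t * x))
        = fun x => exp (t ^ 2 * v / 2) * gaussianPDFReal (t * v) v x := by
      funext x
      rw [NNReal.smul_def, smul_eq_mul, Real.coe_toNNReal _ (gaussianPDFReal_nonneg 0 v x), hkey x]
    rw [this]
    exact (integrable_gaussianPDFReal (t * v) v).const_mul _
  · rw [hmap, hd, integral_withDensity_eq_integral_smul hmeaspdf]
    have : (fun x => (gaussianPDFReal 0 v x).toNNReal • exp (t * x))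
        = fun x => exp (t ^ 2 * v / 2) * gaussianPDFReal (t * v) v x := by
      funext x
      rw [NNReal.smul_def, smul_eq_mul, Real.coe_toNNReal _ (gaussianPDFReal_nonneg 0 v x), hkey x]
    rw [this, integral_const_mul, integral_gaussianPDFReal_eq_one (t * v) hv, mul_one]

lemma gaussian_exp_abs (v : ℝ≥0) (t : ℝ) (ht : 0 ≤ t) :
    Integrable (fun x => exp (t * |x|)) (gaussianReal 0 v) ∧
    ∫ x, exp (t * |x|) ∂(gaussianReal 0 v) ≤ 2 * exp (t ^ 2 * v / 2) := by
  have hmeas : Measurable fun x : ℝ => exp (t * |x|) :=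
    (measurable_id.abs.const_mul t).exp
  by_cases hv : v = 0
  · subst hv
    rw [gaussianReal_zero_var]
    constructor
    · refine ⟨hmeas.aestronglyMeasurable, ?_⟩
      rw [hasFiniteIntegral_iff_norm, lintegral_dirac' _ (by fun_prop)]
      exact ENNReal.ofReal_lt_top
    · rw [integral_dirac]
      norm_num
  · obtain ⟨hi1, he1⟩ := gaussian_mgf v hv t
    obtain ⟨hi2, he2⟩ := gaussian_mgf v hv (-t)
    have hpt : ∀ x : ℝ, exp (t * |x|) ≤ exp (t * x) + exp (-t * x) := by
      intro x
      rcases abs_cases x with ⟨h1, _⟩ | ⟨h1, _⟩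
      · rw [h1]
        nlinarith [exp_pos (-t * x)]
      · rw [h1, mul_neg, ← neg_mul]
        nlinarith [exp_pos (t * x)]
    have hsum : Integrable (fun x => exp (t * x) + exp (-t * x)) (gaussianReal 0 v) :=
      hi1.add hi2
    have hint : Integrable (fun x => exp (t * |x|)) (gaussianReal 0 v) := by
      refine hsum.mono' hmeas.aestronglyMeasurable (Filter.Eventually.of_forall fun x => ?_)
      rw [Real.norm_eq_abs, abs_of_nonneg (exp_pos _).le]
      exact hpt x
    refine ⟨hint, ?_⟩
    calc ∫ x, exp (t * |x|) ∂(gaussianReal 0 v)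
        ≤ ∫ x, (exp (t * x) + exp (-t * x)) ∂(gaussianReal 0 v) :=
          integral_mono hint hsum hpt
      _ = exp (t ^ 2 * v / 2) + exp ((-t) ^ 2 * v / 2) := by
          rw [integral_add hi1 hi2, he1, he2]
      _ = 2 * exp (t ^ 2 * v / 2) := by rw [neg_pow]; ring_nf


lemma quantizer_max_bound
    {Ω : Type*} [mΩ : MeasurableSpace Ω] (P : Measure Ω) [IsProbabilityMeasure P]
    (Z hatZ : Ω → ℝ) (hZ : Measurable Z) (hhatZ : Measurable hatZ)
    (lam : ℝ) (hlam : 0 ≤ lam)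
    (hint : Integrable (fun ω => exp (lam * |Z ω|)) P)
    (hstat : hatZ =ᵐ[P] P[Z | MeasurableSpace.comap hatZ inferInstance]) :
    ∫ ω, exp (lam * max |Z ω| |hatZ ω|) ∂P ≤ 2 * ∫ ω, exp (lam * |Z ω|) ∂P := by
  obtain ⟨hi2, hle2⟩ := quantizer_exp_bound P Z hatZ hZ hhatZ lam hlam hint hstat
  have hpt : ∀ ω, exp (lam * max |Z ω| |hatZ ω|) ≤ exp (lam * |Z ω|) + exp (lam * |hatZ ω|) := by
    intro ω
    rcases max_cases |Z ω| |hatZ ω| with ⟨h1, _⟩ | ⟨h1, _⟩ <;> rw [h1]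
    · nlinarith [exp_pos (lam * |hatZ ω|)]
    · nlinarith [exp_pos (lam * |Z ω|)]
  have hmeas : Measurable (fun ω => exp (lam * max |Z ω| |hatZ ω|)) :=
    ((hZ.abs.max hhatZ.abs).const_mul lam).exp
  have hintmax : Integrable (fun ω => exp (lam * max |Z ω| |hatZ ω|)) P := by
    refine (hint.add hi2).mono' hmeas.aestronglyMeasurable
      (Filter.Eventually.of_forall fun ω => ?_)
    rw [Real.norm_eq_abs, abs_of_nonneg (exp_pos _).le]
    exact hpt ω
  calc ∫ ω, exp (lam * max |Z ω| |hatZ ω|) ∂P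
      ≤ ∫ ω, (exp (lam * |Z ω|) + exp (lam * |hatZ ω|)) ∂P :=
        integral_mono hintmax (hint.add hi2) hpt
    _ = (∫ ω, exp (lam * |Z ω|) ∂P) + ∫ ω, exp (lam * |hatZ ω|) ∂P := integral_add hint hi2
    _ ≤ (∫ ω, exp (lam * |Z ω|) ∂P) + ∫ ω, exp (lam * |Z ω|) ∂P := by linarith
    _ = 2 * ∫ ω, exp (lam * |Z ω|) ∂P := by ring

/-- **Exponential moments of a stationary quantizer.**
If `Ẑ = E[Z | σ(Ẑ)]` a.s. (as holds for quadratic optimal quantizers) and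
`E[e^{λ|Z|}] < ∞` for some `λ ≥ 0`, then `E[e^{λ max(|Z|,|Ẑ|)}] ≤ 2 E[e^{λ|Z|}]`.
Moreover, if `Z` is centered Gaussian with variance `v = σ_Z²`, then for every `q ≥ 1`,
`(E[e^{2qλ max(|Z|,|Ẑ|)}])^{1/(2q)} ≤ 2^{1/q} e^{q λ² σ_Z²}`. -/
theorem exp_moment_stationary_quantizer
    {Ω : Type*} [MeasurableSpace Ω] (P : Measure Ω) [IsProbabilityMeasure P]
    (Z hatZ : Ω → ℝ) (hZ : Measurable Z) (hhatZ : Measurable hatZ)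
    (lam : ℝ) (hlam : 0 ≤ lam)
    (hint : Integrable (fun ω => exp (lam * |Z ω|)) P)
    (hstat : hatZ =ᵐ[P] P[Z | MeasurableSpace.comap hatZ inferInstance]) :
    (∫ ω, exp (lam * max |Z ω| |hatZ ω|) ∂P) ≤ 2 * ∫ ω, exp (lam * |Z ω|) ∂P ∧
    ∀ v : ℝ≥0, Measure.map Z P = gaussianReal 0 v →
      ∀ q : ℝ, 1 ≤ q →
        (∫ ω, exp (2 * q * lam * max |Z ω| |hatZ ω|) ∂P) ^ (1 / (2 * q)) ≤
          2 ^ (1 / q) * exp (q * lam ^ 2 * v) := by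
  constructor
  · exact quantizer_max_bound P Z hatZ hZ hhatZ lam hlam hint hstat
  · intro v hmap q hq
    have hq0 : (0 : ℝ) < q := lt_of_lt_of_le one_pos hq
    set t : ℝ := 2 * q * lam with ht_def
    have ht : 0 ≤ t := by positivity
    obtain ⟨hgi, hgb⟩ := gaussian_exp_abs v t ht
    have hmeasg : Measurable fun x : ℝ => exp (t * |x|) :=
      (measurable_id.abs.const_mul t).exp
    have hintt : Integrable (fun ω => exp (t * |Z ω|)) P := by
      rw [← hmap] at hgi
      exact (integrable_map_measure hmeasg.aestronglyMeasurable hZ.aemeasurable).mp hgi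
    have hval : ∫ ω, exp (t * |Z ω|) ∂P = ∫ x, exp (t * |x|) ∂(gaussianReal 0 v) := by
      rw [← hmap, integral_map hZ.aemeasurable hmeasg.aestronglyMeasurable]
    have h1 := quantizer_max_bound P Z hatZ hZ hhatZ t ht hintt hstat
    have h2 : ∫ ω, exp (t * max |Z ω| |hatZ ω|) ∂P ≤ 4 * exp (t ^ 2 * v / 2) := by
      calc ∫ ω, exp (t * max |Z ω| |hatZ ω|) ∂P
          ≤ 2 * ∫ ω, exp (t * |Z ω|) ∂P := h1
        _ = 2 * ∫ x, exp (t * |x|) ∂(gaussianReal 0 v) := by rw [hval]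
        _ ≤ 2 * (2 * exp (t ^ 2 * v / 2)) := by linarith
        _ = 4 * exp (t ^ 2 * v / 2) := by ring
    have hLnn : 0 ≤ ∫ ω, exp (t * max |Z ω| |hatZ ω|) ∂P :=
      integral_nonneg fun ω => (exp_pos _).le
    have hexp : (0 : ℝ) ≤ 1 / (2 * q) := by positivity
    have h3 := Real.rpow_le_rpow hLnn h2 hexp
    have h4 : (4 * exp (t ^ 2 * v / 2)) ^ (1 / (2 * q))
        = 2 ^ (1 / q) * exp (q * lam ^ 2 * v) := by
      rw [Real.mul_rpow (by norm_num) (exp_pos _).le]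
      congr 1
      · have h42 : (4 : ℝ) = (2 : ℝ) ^ (2 : ℝ) := by
          rw [show ((2 : ℝ) : ℝ) = ((2 : ℕ) : ℝ) by norm_num, Real.rpow_natCast]
          norm_num
        rw [h42, ← Real.rpow_mul (by norm_num : (0:ℝ) ≤ 2)]
        congr 1
        field_simp
      · rw [Real.rpow_def_of_pos (exp_pos _), Real.log_exp]
        congr 1
        rw [ht_def]
        field_simp
    calc (∫ ω, exp (t * max |Z ω| |hatZ ω|) ∂P) ^ (1 / (2 * q))
        ≤ (4 * exp (t ^ 2 * v / 2)) ^ (1 / (2 * q)) := h3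
      _ = 2 ^ (1 / q) * exp (q * lam ^ 2 * v) := h4
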